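/- arXiv:2005.13239 — 2 statements merged into one kernel-verified Lean document; each statement's English description precedes it below -/
import Mathlib

section
/- Let M and M̂ be two MDPs with the same state space S, action space A, reward function r, initial distribution μ₀, and discount γ ∈ (0,1), but with transition kernels T and T̂ respectively. For a policy π, define G^π(s,a) = E_{s'∼T̂(s,a)}[V_M^π(s')] − E_{s'∼T(s,a)}[V_M^π(s')], where V_M^π is the value function of π in M. Then η_{M̂}(π) − η_M(π) = γ · Ē_{(s,a)∼ρ^π_{T̂}}[G^π(s,a)], where η denotes expected discounted return and ρ^π_{T̂}(s,a) = π(a|s)·Σ_{t≥0} γ^t P^π_{T̂,t}(s) is the (unnormalized) discounted occupancy measure under dynamics T̂. -/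
open scoped BigOperators
open Filter Topology Classical

section MDP

variable {S A : Type*} [Fintype S] [Fintype A]

/-- π is a valid stochastic policy. -/
def IsPolicy (π : S → A → ℝ) : Prop :=
  (∀ s a, 0 ≤ π s a) ∧ ∀ s, ∑ a, π s a = 1

/-- T is a valid transition kernel. -/
def IsKernel (T : S → A → S → ℝ) : Prop :=
  (∀ s a s', 0 ≤ T s a s') ∧ ∀ s a, ∑ s', T s a s' = 1

/-- μ is a probability distribution on states. -/
def IsDist (μ : S → ℝ) : Prop :=
  (∀ s, 0 ≤ μ s) ∧ ∑ s, μ s = 1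

/-- Distribution of the state at time t under policy π and dynamics T, from μ0. -/
def stateDist (T : S → A → S → ℝ) (π : S → A → ℝ) (μ0 : S → ℝ) : ℕ → S → ℝ
  | 0 => μ0
  | t + 1 => fun s' => ∑ s, ∑ a, stateDist T π μ0 t s * π s a * T s a s'

/-- Unnormalized discounted occupancy measure ρ^π_T(s,a). -/
noncomputable def occupancy (γ : ℝ) (T : S → A → S → ℝ) (π : S → A → ℝ)
    (μ0 : S → ℝ) (s : S) (a : A) : ℝ :=
  π s a * ∑' t : ℕ, γ ^ t * stateDist T π μ0 t s

/-- Improper expectation Ē of f with respect to the occupancy measure. -/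
noncomputable def expOcc (γ : ℝ) (T : S → A → S → ℝ) (π : S → A → ℝ)
    (μ0 : S → ℝ) (f : S → A → ℝ) : ℝ :=
  ∑ s, ∑ a, occupancy γ T π μ0 s a * f s a

/-- Expected discounted return η_M(π). -/
noncomputable def ret (γ : ℝ) (T : S → A → S → ℝ) (π : S → A → ℝ)
    (μ0 : S → ℝ) (r : S → A → ℝ) : ℝ :=
  ∑' t : ℕ, γ ^ t * ∑ s, ∑ a, stateDist T π μ0 t s * π s a * r s a

/-- Value function V_M^π(s): return starting from the Dirac distribution at s. -/
noncomputable def value (γ : ℝ) (T : S → A → S → ℝ) (π : S → A → ℝ)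
    (r : S → A → ℝ) (s0 : S) : ℝ :=
  ret γ T π (fun s => if s = s0 then 1 else 0) r

/-- G^π(s,a) = E_{s'∼T̂(s,a)}[V_M^π(s')] − E_{s'∼T(s,a)}[V_M^π(s')]. -/
noncomputable def Gpi (γ : ℝ) (T Th : S → A → S → ℝ) (π : S → A → ℝ)
    (r : S → A → ℝ) (s : S) (a : A) : ℝ :=
  (∑ s', Th s a s' * value γ T π r s') - ∑ s', T s a s' * value γ T π r s'

/-- Total variation distance between two distributions on a finite set. -/
noncomputable def tvDist (P Q : S → ℝ) : ℝ :=
  ⨆ E : Finset S, |(∑ s ∈ E, P s) - ∑ s ∈ E, Q s|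

/-- Integral probability metric induced by a function class F. -/
noncomputable def ipm (F : Set (S → ℝ)) (P Q : S → ℝ) : ℝ :=
  sSup {x : ℝ | ∃ f ∈ F, x = |(∑ s, P s * f s) - ∑ s, Q s * f s|}

/-! ### Auxiliary lemmas -/

lemma stateDist_nonneg {T : S → A → S → ℝ} {π : S → A → ℝ} {μ0 : S → ℝ}
    (hT : IsKernel T) (hπ : IsPolicy π) (hμ : ∀ s, 0 ≤ μ0 s) :
    ∀ t s, 0 ≤ stateDist T π μ0 t s := by
  intro t
  induction t with
  | zero => exact hμ
  | succ t ih =>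
    intro s'
    apply Finset.sum_nonneg; intro s _
    apply Finset.sum_nonneg; intro a _
    exact mul_nonneg (mul_nonneg (ih s) (hπ.1 s a)) (hT.1 s a s')

lemma stateDist_sum {T : S → A → S → ℝ} {π : S → A → ℝ} {μ0 : S → ℝ}
    (hT : IsKernel T) (hπ : IsPolicy π) (hμ : ∑ s, μ0 s = 1) :
    ∀ t, ∑ s, stateDist T π μ0 t s = 1 := by
  intro t
  induction t with
  | zero => exact hμ
  | succ t ih =>
    show ∑ s', ∑ s, ∑ a, stateDist T π μ0 t s * π s a * T s a s' = 1
    rw [Finset.sum_comm]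
    calc ∑ s, ∑ s', ∑ a, stateDist T π μ0 t s * π s a * T s a s'
        = ∑ s, ∑ a, ∑ s', stateDist T π μ0 t s * π s a * T s a s' := by
          exact Finset.sum_congr rfl fun s _ => by rw [Finset.sum_comm]
      _ = ∑ s, ∑ a, stateDist T π μ0 t s * π s a := by
          refine Finset.sum_congr rfl fun s _ => Finset.sum_congr rfl fun a _ => ?_
          rw [← Finset.mul_sum, hT.2 s a, mul_one]
      _ = ∑ s, stateDist T π μ0 t s := by
          refine Finset.sum_congr rfl fun s _ => ?_
          rw [← Finset.mul_sum, hπ.2 s, mul_one]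
      _ = 1 := ih

lemma stateDist_le_one {T : S → A → S → ℝ} {π : S → A → ℝ} {μ0 : S → ℝ}
    (hT : IsKernel T) (hπ : IsPolicy π) (hμ : IsDist μ0) :
    ∀ t s, stateDist T π μ0 t s ≤ 1 := by
  intro t s
  calc stateDist T π μ0 t s ≤ ∑ s', stateDist T π μ0 t s' :=
        Finset.single_le_sum (fun s' _ => stateDist_nonneg hT hπ hμ.1 t s') (Finset.mem_univ s)
    _ = 1 := stateDist_sum hT hπ hμ.2 t

lemma summable_aux {γ : ℝ} (hγ0 : 0 ≤ γ) (hγ1 : γ < 1) (c : ℕ → ℝ) (C : ℝ)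
    (hc : ∀ t, |c t| ≤ C) : Summable (fun t => γ ^ t * c t) := by
  refine Summable.of_norm_bounded ((summable_geometric_of_lt_one hγ0 hγ1).mul_left C) ?_
  intro t
  rw [Real.norm_eq_abs, abs_mul, abs_pow, abs_of_nonneg hγ0]
  calc γ ^ t * |c t| ≤ γ ^ t * C := by
        exact mul_le_mul_of_nonneg_left (hc t) (pow_nonneg hγ0 t)
    _ = C * γ ^ t := mul_comm _ _

/-- Shift identity. -/
lemma stateDist_shift (T : S → A → S → ℝ) (π : S → A → ℝ) (μ0 : S → ℝ) :
    ∀ t, stateDist T π μ0 (t + 1) = stateDist T π (stateDist T π μ0 1) t := by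
  intro t
  induction t with
  | zero => rfl
  | succ t ih =>
    show (fun s' => ∑ s, ∑ a, stateDist T π μ0 (t+1) s * π s a * T s a s') = _
    rw [ih]; rfl

lemma stateDist_linear (T : S → A → S → ℝ) (π : S → A → ℝ) (μ0 : S → ℝ) :
    ∀ t s, stateDist T π μ0 t s
      = ∑ s0, μ0 s0 * stateDist T π (fun s => if s = s0 then 1 else 0) t s := by
  intro t
  induction t with
  | zero =>
    intro s
    show μ0 s = ∑ s0, μ0 s0 * (if s = s0 then 1 else 0)
    simp
  | succ t ih =>
    intro s'
    show (∑ s, ∑ a, stateDist T π μ0 t s * π s a * T s a s') = _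
    have : ∀ s0 : S, μ0 s0 * stateDist T π (fun s => if s = s0 then 1 else 0) (t+1) s'
        = ∑ s, ∑ a, (μ0 s0 * stateDist T π (fun s => if s = s0 then 1 else 0) t s) * π s a * T s a s' := by
      intro s0
      show μ0 s0 * ∑ s, ∑ a, stateDist T π (fun s => if s = s0 then 1 else 0) t s * π s a * T s a s'
          = ∑ s, ∑ a, (μ0 s0 * stateDist T π (fun s => if s = s0 then 1 else 0) t s) * π s a * T s a s'
      rw [Finset.mul_sum]
      refine Finset.sum_congr rfl fun s _ => ?_
      rw [Finset.mul_sum]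
      exact Finset.sum_congr rfl fun a _ => by ring
    have hR : (∑ s0, μ0 s0 * stateDist T π (fun s => if s = s0 then 1 else 0) (t+1) s')
        = ∑ s0, ∑ s, ∑ a, (μ0 s0 * stateDist T π (fun s => if s = s0 then 1 else 0) t s) * π s a * T s a s' :=
      Finset.sum_congr rfl fun s0 _ => this s0
    rw [hR, Finset.sum_comm (f := fun s0 s => ∑ a, (μ0 s0 * stateDist T π (fun s => if s = s0 then 1 else 0) t s) * π s a * T s a s')]
    refine Finset.sum_congr rfl fun s _ => ?_
    rw [Finset.sum_comm]
    refine Finset.sum_congr rfl fun a _ => ?_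
    rw [ih s]
    rw [Finset.sum_mul, Finset.sum_mul]

/-- The mean reward at one step. -/
noncomputable def rbar (π : S → A → ℝ) (r : S → A → ℝ) (s : S) : ℝ := ∑ a, π s a * r s a

lemma ret_eq (γ : ℝ) (T : S → A → S → ℝ) (π : S → A → ℝ) (μ0 : S → ℝ) (r : S → A → ℝ) :
    ret γ T π μ0 r = ∑' t : ℕ, γ ^ t * ∑ s, stateDist T π μ0 t s * rbar π r s := by
  unfold ret
  refine tsum_congr fun t => ?_
  congr 1
  refine Finset.sum_congr rfl fun s _ => ?_
  rw [rbar, Finset.mul_sum]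
  exact Finset.sum_congr rfl fun a _ => by ring

lemma weighted_abs_bound (g μ : S → ℝ)
    (h0 : ∀ s, 0 ≤ μ s) (h1 : ∀ s, μ s ≤ 1) :
    |∑ s, μ s * g s| ≤ ∑ s, |g s| := by
  calc |∑ s, μ s * g s| ≤ ∑ s, |μ s * g s| := Finset.abs_sum_le_sum_abs _ _
    _ ≤ ∑ s, |g s| := by
        refine Finset.sum_le_sum fun s _ => ?_
        rw [abs_mul, abs_of_nonneg (h0 s)]
        calc μ s * |g s| ≤ 1 * |g s| :=
              mul_le_mul_of_nonneg_right (h1 s) (abs_nonneg _)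
          _ = |g s| := one_mul _

lemma summable_ret {γ : ℝ} (hγ0 : 0 ≤ γ) (hγ1 : γ < 1)
    {T : S → A → S → ℝ} {π : S → A → ℝ} {μ0 : S → ℝ}
    (hT : IsKernel T) (hπ : IsPolicy π) (hμ : IsDist μ0) (g : S → ℝ) :
    Summable (fun t => γ ^ t * ∑ s, stateDist T π μ0 t s * g s) := by
  refine summable_aux hγ0 hγ1 _ (∑ s, |g s|) fun t => ?_
  exact weighted_abs_bound g _ (stateDist_nonneg hT hπ hμ.1 t) (stateDist_le_one hT hπ hμ t)

lemma isDist_step {T : S → A → S → ℝ} {π : S → A → ℝ} {μ0 : S → ℝ}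
    (hT : IsKernel T) (hπ : IsPolicy π) (hμ : IsDist μ0) :
    IsDist (stateDist T π μ0 1) :=
  ⟨stateDist_nonneg hT hπ hμ.1 1, stateDist_sum hT hπ hμ.2 1⟩

lemma ret_bellman {γ : ℝ} (hγ0 : 0 ≤ γ) (hγ1 : γ < 1)
    {T : S → A → S → ℝ} {π : S → A → ℝ} {μ0 : S → ℝ}
    (hT : IsKernel T) (hπ : IsPolicy π) (hμ : IsDist μ0) (r : S → A → ℝ) :
    ret γ T π μ0 r = (∑ s, μ0 s * rbar π r s) + γ * ret γ T π (stateDist T π μ0 1) r := by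
  rw [ret_eq, ret_eq]
  rw [Summable.tsum_eq_zero_add (summable_ret hγ0 hγ1 hT hπ hμ _)]
  simp only [pow_zero, one_mul, pow_succ]
  congr 1
  rw [← tsum_mul_left]
  refine tsum_congr fun t => ?_
  rw [stateDist_shift]
  ring

lemma ret_linear {γ : ℝ} (hγ0 : 0 ≤ γ) (hγ1 : γ < 1)
    {T : S → A → S → ℝ} {π : S → A → ℝ} {μ0 : S → ℝ}
    (hT : IsKernel T) (hπ : IsPolicy π) (hμ : ∀ s, 0 ≤ μ0 s) (r : S → A → ℝ) :
    ret γ T π μ0 r = ∑ s0, μ0 s0 * value γ T π r s0 := by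
  have hdirac : ∀ s0 : S, IsDist (fun s : S => if s = s0 then 1 else 0) := by
    intro s0
    constructor
    · intro s; dsimp only; split_ifs <;> norm_num
    · simp
  rw [ret_eq]
  have key : ∀ t : ℕ, γ ^ t * ∑ s, stateDist T π μ0 t s * rbar π r s
      = ∑ s0, μ0 s0 * (γ ^ t * ∑ s, stateDist T π (fun s => if s = s0 then 1 else 0) t s * rbar π r s) := by
    intro t
    rw [show (∑ s, stateDist T π μ0 t s * rbar π r s)
        = ∑ s, (∑ s0, μ0 s0 * stateDist T π (fun s => if s = s0 then 1 else 0) t s) * rbar π r s from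
      Finset.sum_congr rfl fun s _ => by rw [stateDist_linear]]
    simp only [Finset.sum_mul, Finset.mul_sum]
    rw [Finset.sum_comm]
    exact Finset.sum_congr rfl fun s0 _ => Finset.sum_congr rfl fun s _ => by ring
  rw [tsum_congr key, Summable.tsum_finsetSum]
  · refine Finset.sum_congr rfl fun s0 _ => ?_
    rw [tsum_mul_left, value, ret_eq]
  · intro s0 _
    exact ((summable_ret hγ0 hγ1 hT hπ (hdirac s0) (rbar π r)).mul_left _)

lemma value_bellman {γ : ℝ} (hγ0 : 0 ≤ γ) (hγ1 : γ < 1)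
    {T : S → A → S → ℝ} {π : S → A → ℝ}
    (hT : IsKernel T) (hπ : IsPolicy π) (r : S → A → ℝ) (s0 : S) :
    value γ T π r s0 = rbar π r s0
      + γ * ∑ a, π s0 a * ∑ s', T s0 a s' * value γ T π r s' := by
  have hdirac : IsDist (fun s : S => if s = s0 then 1 else 0) := by
    constructor
    · intro s; dsimp only; split_ifs <;> norm_num
    · simp
  rw [value, ret_bellman hγ0 hγ1 hT hπ hdirac r]
  congr 1
  · simp
  rw [ret_linear hγ0 hγ1 hT hπ (stateDist_nonneg hT hπ hdirac.1 1) r]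
  congr 1
  have h1 : ∀ s' : S, stateDist T π (fun s : S => if s = s0 then 1 else 0) 1 s'
      = ∑ a, π s0 a * T s0 a s' := by
    intro s'
    show (∑ s, ∑ a, (if s = s0 then (1:ℝ) else 0) * π s a * T s a s') = _
    rw [Finset.sum_eq_single s0]
    · simp
    · intro s _ hs; simp [hs]
    · intro h; exact absurd (Finset.mem_univ s0) h
  calc ∑ s', stateDist T π (fun s => if s = s0 then 1 else 0) 1 s' * value γ T π r s'
      = ∑ s', (∑ a, π s0 a * T s0 a s') * value γ T π r s' :=
        Finset.sum_congr rfl fun s' _ => by rw [h1]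
    _ = ∑ a, π s0 a * ∑ s', T s0 a s' * value γ T π r s' := by
        simp only [Finset.sum_mul, Finset.mul_sum]
        rw [Finset.sum_comm]
        exact Finset.sum_congr rfl fun a _ => Finset.sum_congr rfl fun s' _ => by ring

set_option maxHeartbeats 1000000 in
/-- Telescoping lemma: η_M̂(π) − η_M(π) = γ · Ē_{ρ^π_T̂}[G^π(s,a)]. -/
theorem telescoping_lemma (γ : ℝ) (hγ0 : 0 < γ) (hγ1 : γ < 1)
    (T Th : S → A → S → ℝ) (hT : IsKernel T) (hTh : IsKernel Th)
    (μ0 : S → ℝ) (hμ : IsDist μ0) (r : S → A → ℝ)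
    (rmax : ℝ) (hr : ∀ s a, |r s a| ≤ rmax)
    (π : S → A → ℝ) (hπ : IsPolicy π) :
    ret γ Th π μ0 r - ret γ T π μ0 r = γ * expOcc γ Th π μ0 (Gpi γ T Th π r) := by
  have hγ0' : (0:ℝ) ≤ γ := le_of_lt hγ0
  set V : S → ℝ := value γ T π r with hV
  set D : ℕ → S → ℝ := stateDist Th π μ0 with hD
  set h : S → ℝ := fun s => ∑ a, π s a * Gpi γ T Th π r s a with hh
  -- per-step identity
  have step : ∀ t : ℕ, ∑ s, D t s * rbar π r s
      = (∑ s, D t s * V s) - γ * (∑ s, D (t+1) s * V s) + γ * ∑ s, D t s * h s := by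
    intro t
    have hDt1 : ∑ s, D (t+1) s * V s
        = ∑ s, D t s * ∑ a, π s a * ∑ s', Th s a s' * V s' := by
      show (∑ s', (∑ s, ∑ a, D t s * π s a * Th s a s') * V s')
          = ∑ s, D t s * ∑ a, π s a * ∑ s', Th s a s' * V s'
      simp only [Finset.sum_mul, Finset.mul_sum]
      rw [Finset.sum_comm]
      refine Finset.sum_congr rfl fun s _ => ?_
      rw [Finset.sum_comm]
      exact Finset.sum_congr rfl fun a _ => Finset.sum_congr rfl fun s' _ => by ring
    rw [hDt1]
    have hVb : ∀ s, V s = rbar π r s + γ * ∑ a, π s a * ∑ s', T s a s' * V s' :=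
      fun s => value_bellman hγ0' hγ1 hT hπ r s
    rw [show (∑ s, D t s * V s)
        = ∑ s, D t s * (rbar π r s + γ * ∑ a, π s a * ∑ s', T s a s' * V s') from
      Finset.sum_congr rfl fun s _ => by rw [← hVb s]]
    rw [Finset.mul_sum, Finset.mul_sum, ← Finset.sum_sub_distrib, ← Finset.sum_add_distrib]
    refine (Finset.sum_congr rfl fun s _ => ?_).symm
    have hGpi : h s = (∑ a, π s a * ∑ s', Th s a s' * V s')
        - ∑ a, π s a * ∑ s', T s a s' * V s' := by
      rw [hh, ← Finset.sum_sub_distrib]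
      refine Finset.sum_congr rfl fun a _ => ?_
      rw [Gpi]
      ring
    rw [hGpi]
    ring
  -- summabilities
  have sumD : ∀ g : S → ℝ, Summable (fun t => γ ^ t * ∑ s, D t s * g s) :=
    fun g => summable_ret hγ0' hγ1 hTh hπ hμ g
  have sumDs : ∀ s : S, Summable (fun t => γ ^ t * D t s) := by
    intro s
    refine summable_aux hγ0' hγ1 _ 1 fun t => ?_
    rw [abs_of_nonneg (stateDist_nonneg hTh hπ hμ.1 t s)]
    exact stateDist_le_one hTh hπ hμ t s
  -- telescoping part
  have sumA : Summable (fun t => γ ^ t * ∑ s, D t s * V s) := sumD V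
  have sumA' : Summable (fun t => γ ^ (t+1) * ∑ s, D (t+1) s * V s) :=
    (summable_nat_add_iff 1).mpr sumA
  have htel : ∑' t : ℕ, (γ ^ t * (∑ s, D t s * V s) - γ ^ (t+1) * ∑ s, D (t+1) s * V s)
      = ∑ s, μ0 s * V s := by
    have hsum : Summable (fun t => γ ^ t * (∑ s, D t s * V s) - γ ^ (t+1) * ∑ s, D (t+1) s * V s) :=
      sumA.sub sumA'
    have hten : Tendsto (fun n => ∑ i ∈ Finset.range n,
        (γ ^ i * (∑ s, D i s * V s) - γ ^ (i+1) * ∑ s, D (i+1) s * V s)) atTop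
        (𝓝 (∑ s, μ0 s * V s)) := by
      have heq : ∀ n, ∑ i ∈ Finset.range n,
          (γ ^ i * (∑ s, D i s * V s) - γ ^ (i+1) * ∑ s, D (i+1) s * V s)
          = (∑ s, μ0 s * V s) - γ ^ n * ∑ s, D n s * V s := by
        intro n
        rw [Finset.sum_range_sub' (fun i => γ ^ i * ∑ s, D i s * V s)]
        simp [hD, stateDist]
      simp only [heq]
      have hlim : Tendsto (fun n => γ ^ n * ∑ s, D n s * V s) atTop (𝓝 0) := by
        have hb : ∀ n, |γ ^ n * ∑ s, D n s * V s| ≤ (∑ s, |V s|) * γ ^ n := by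
          intro n
          rw [abs_mul, abs_pow, abs_of_nonneg hγ0', mul_comm]
          refine mul_le_mul_of_nonneg_right ?_ (pow_nonneg hγ0' n)
          exact weighted_abs_bound V _ (stateDist_nonneg hTh hπ hμ.1 n)
            (stateDist_le_one hTh hπ hμ n)
        have hg : Tendsto (fun n => (∑ s, |V s|) * γ ^ n) atTop (𝓝 0) := by
          simpa using (tendsto_pow_atTop_nhds_zero_of_lt_one hγ0' hγ1).const_mul (∑ s, |V s|)
        refine squeeze_zero_norm (fun n => ?_) hg
        simpa [Real.norm_eq_abs, abs_mul, abs_pow] using hb n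
      simpa using tendsto_const_nhds.sub hlim
    exact hsum.hasSum_iff_tendsto_nat.mpr hten |>.tsum_eq
  -- put together
  have main : ret γ Th π μ0 r = (∑ s, μ0 s * V s) + γ * ∑' t : ℕ, γ ^ t * ∑ s, D t s * h s := by
    rw [ret_eq]
    calc ∑' t : ℕ, γ ^ t * ∑ s, D t s * rbar π r s
        = ∑' t : ℕ, ((γ ^ t * (∑ s, D t s * V s) - γ ^ (t+1) * ∑ s, D (t+1) s * V s)
            + γ ^ (t+1) * ∑ s, D t s * h s) := by
          refine tsum_congr fun t => ?_
          rw [step t]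
          ring
      _ = (∑ s, μ0 s * V s) + γ * ∑' t : ℕ, γ ^ t * ∑ s, D t s * h s := by
          have hs2 : Summable (fun t => γ ^ (t+1) * ∑ s, D t s * h s) := by
            simpa [pow_succ, mul_comm, mul_assoc, mul_left_comm] using (sumD h).mul_left γ
          rw [Summable.tsum_add (sumA.sub sumA') hs2, htel]
          congr 1
          rw [← tsum_mul_left]
          refine tsum_congr fun t => ?_
          ring
  have hretT : ret γ T π μ0 r = ∑ s, μ0 s * V s := ret_linear hγ0' hγ1 hT hπ hμ.1 r
  have hocc : ∑' t : ℕ, γ ^ t * ∑ s, D t s * h s = expOcc γ Th π μ0 (Gpi γ T Th π r) := by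
    calc ∑' t : ℕ, γ ^ t * ∑ s, D t s * h s
        = ∑' t : ℕ, ∑ s, (γ ^ t * D t s) * h s := by
          refine tsum_congr fun t => ?_
          rw [Finset.mul_sum]
          exact Finset.sum_congr rfl fun s _ => by ring
      _ = ∑ s, ∑' t : ℕ, (γ ^ t * D t s) * h s := by
          refine Summable.tsum_finsetSum fun s _ => (sumDs s).mul_right _
      _ = ∑ s, (∑' t : ℕ, γ ^ t * D t s) * h s := by
          refine Finset.sum_congr rfl fun s _ => ?_
          rw [tsum_mul_right]
      _ = expOcc γ Th π μ0 (Gpi γ T Th π r) := by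
          rw [expOcc]
          refine Finset.sum_congr rfl fun s _ => ?_
          rw [hh, Finset.mul_sum]
          refine Finset.sum_congr rfl fun a _ => ?_
          rw [occupancy]
          ring
  rw [main, hretT, hocc]
  ring

end MDP
end

section
/- For any MDP with rewards bounded by |r(s,a)| ≤ r_max and discount γ ∈ (0,1), and any two transition kernels T, T̂, the performance difference satisfies |η_{M̂}(π) − η_M(π)| ≤ (2γ·r_max/(1−γ)²) · sup_{s,a} D_TV(T̂(s,a), T(s,a)). -/
open scoped BigOperators
open Filter Topology Classical

section MDP

variable {S A : Type*} [Fintype S] [Fintype A]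

lemma tvDist_nonneg (P Q : S → ℝ) : 0 ≤ tvDist P Q := by
  have h := le_ciSup (f := fun E : Finset S => |(∑ s ∈ E, P s) - ∑ s ∈ E, Q s|)
    ((Set.finite_range _).bddAbove) (∅ : Finset S)
  exact le_trans (abs_nonneg _) h

lemma l1_le_two_tvDist (P Q : S → ℝ) (h : ∑ s, P s = ∑ s, Q s) :
    ∑ s, |P s - Q s| ≤ 2 * tvDist P Q := by
  classical
  set E : Finset S := Finset.univ.filter (fun s => Q s ≤ P s) with hE
  have h1 : ∑ s, |P s - Q s|
      = (∑ s ∈ E, (P s - Q s)) + ∑ s ∈ Finset.univ.filter (fun s => ¬ Q s ≤ P s), (Q s - P s) := by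
    rw [← Finset.sum_filter_add_sum_filter_not Finset.univ (fun s => Q s ≤ P s)]
    congr 1
    · apply Finset.sum_congr rfl; intro s hs
      simp only [Finset.mem_filter] at hs
      rw [abs_of_nonneg (by linarith [hs.2])]
    · apply Finset.sum_congr rfl; intro s hs
      simp only [Finset.mem_filter] at hs
      rw [abs_of_nonpos (by push_neg at hs; linarith [hs.2])]; ring
  have h2 : (∑ s ∈ E, (P s - Q s)) + ∑ s ∈ Finset.univ.filter (fun s => ¬ Q s ≤ P s), (P s - Q s) = 0 := by
    rw [Finset.sum_filter_add_sum_filter_not]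
    simp [Finset.sum_sub_distrib, h]
  have h3 : ∑ s, |P s - Q s| = 2 * ((∑ s ∈ E, P s) - ∑ s ∈ E, Q s) := by
    rw [h1]
    have : ∑ s ∈ Finset.univ.filter (fun s => ¬ Q s ≤ P s), (Q s - P s)
        = ∑ s ∈ E, (P s - Q s) := by
      have := h2
      have h4 : ∑ s ∈ Finset.univ.filter (fun s => ¬ Q s ≤ P s), (Q s - P s)
          = - ∑ s ∈ Finset.univ.filter (fun s => ¬ Q s ≤ P s), (P s - Q s) := by
        rw [← Finset.sum_neg_distrib]; apply Finset.sum_congr rfl; intros; ring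
      linarith
    rw [this, Finset.sum_sub_distrib]; ring
  rw [h3]
  have h5 : ((∑ s ∈ E, P s) - ∑ s ∈ E, Q s) ≤ tvDist P Q := by
    refine le_trans (le_abs_self _) ?_
    exact le_ciSup (f := fun E : Finset S => |(∑ s ∈ E, P s) - ∑ s ∈ E, Q s|)
      ((Set.finite_range _).bddAbove) E
  linarith

lemma stateDist_isDist (T : S → A → S → ℝ) (π : S → A → ℝ) (μ0 : S → ℝ)
    (hT : IsKernel T) (hπ : IsPolicy π) (hμ : IsDist μ0) (t : ℕ) :
    IsDist (stateDist T π μ0 t) := by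
  induction t with
  | zero => exact hμ
  | succ t ih =>
    constructor
    · intro s'
      apply Finset.sum_nonneg; intro s _
      apply Finset.sum_nonneg; intro a _
      exact mul_nonneg (mul_nonneg (ih.1 s) (hπ.1 s a)) (hT.1 s a s')
    · show ∑ s', ∑ s, ∑ a, stateDist T π μ0 t s * π s a * T s a s' = 1
      rw [Finset.sum_comm]
      have : ∀ s, ∑ s', ∑ a, stateDist T π μ0 t s * π s a * T s a s'
          = stateDist T π μ0 t s := by
        intro s
        rw [Finset.sum_comm]
        calc ∑ a, ∑ s', stateDist T π μ0 t s * π s a * T s a s'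
            = ∑ a, stateDist T π μ0 t s * π s a * ∑ s', T s a s' := by
              simp [Finset.mul_sum]
          _ = stateDist T π μ0 t s := by
              simp only [hT.2, mul_one]
              rw [← Finset.mul_sum, hπ.2, mul_one]
      simp only [this]; exact ih.2

lemma stateDist_l1_bound (T Th : S → A → S → ℝ) (π : S → A → ℝ) (μ0 : S → ℝ)
    (hT : IsKernel T) (hTh : IsKernel Th) (hπ : IsPolicy π) (hμ : IsDist μ0)
    (ε : ℝ) (hε : ∀ s a, ∑ s', |Th s a s' - T s a s'| ≤ 2 * ε) (t : ℕ) :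
    ∑ s, |stateDist Th π μ0 t s - stateDist T π μ0 t s| ≤ 2 * ε * t := by
  induction t with
  | zero => simp [stateDist]
  | succ t ih =>
    have hd := stateDist_isDist T π μ0 hT hπ hμ t
    set d := stateDist T π μ0 t
    set dh := stateDist Th π μ0 t
    have key : ∀ s' : S, |stateDist Th π μ0 (t+1) s' - stateDist T π μ0 (t+1) s'|
        ≤ ∑ s, ∑ a, (|dh s - d s| * π s a * Th s a s' + d s * π s a * |Th s a s' - T s a s'|) := by
      intro s'
      show |(∑ s, ∑ a, dh s * π s a * Th s a s') - ∑ s, ∑ a, d s * π s a * T s a s'| ≤ _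
      have hrw : (∑ s, ∑ a, dh s * π s a * Th s a s') - ∑ s, ∑ a, d s * π s a * T s a s'
          = ∑ s, ∑ a, ((dh s - d s) * π s a * Th s a s' + d s * π s a * (Th s a s' - T s a s')) := by
        rw [← Finset.sum_sub_distrib]
        apply Finset.sum_congr rfl; intro s _
        rw [← Finset.sum_sub_distrib]
        apply Finset.sum_congr rfl; intro a _; ring
      rw [hrw]
      refine le_trans (Finset.abs_sum_le_sum_abs _ _) ?_
      apply Finset.sum_le_sum; intro s _
      refine le_trans (Finset.abs_sum_le_sum_abs _ _) ?_
      apply Finset.sum_le_sum; intro a _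
      refine le_trans (abs_add_le _ _) ?_
      gcongr
      · rw [abs_mul, abs_mul, abs_of_nonneg (hπ.1 s a), abs_of_nonneg (hTh.1 s a s')]
      · rw [abs_mul, abs_mul, abs_of_nonneg (hd.1 s), abs_of_nonneg (hπ.1 s a)]
    calc ∑ s', |stateDist Th π μ0 (t+1) s' - stateDist T π μ0 (t+1) s'|
        ≤ ∑ s', ∑ s, ∑ a, (|dh s - d s| * π s a * Th s a s' + d s * π s a * |Th s a s' - T s a s'|) :=
          Finset.sum_le_sum (fun s' _ => key s')
      _ = (∑ s, ∑ a, |dh s - d s| * π s a * ∑ s', Th s a s')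
          + ∑ s, ∑ a, d s * π s a * ∑ s', |Th s a s' - T s a s'| := by
          rw [Finset.sum_comm]
          rw [← Finset.sum_add_distrib]
          apply Finset.sum_congr rfl; intro s _
          rw [Finset.sum_comm, ← Finset.sum_add_distrib]
          apply Finset.sum_congr rfl; intro a _
          rw [Finset.sum_add_distrib, Finset.mul_sum, Finset.mul_sum]
      _ ≤ (∑ s, ∑ a, |dh s - d s| * π s a) + ∑ s, ∑ a, d s * π s a * (2 * ε) := by
          apply add_le_add
          · apply le_of_eq
            refine Finset.sum_congr rfl fun s _ => Finset.sum_congr rfl fun a _ => ?_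
            rw [hTh.2 s a, mul_one]
          · refine Finset.sum_le_sum fun s _ => Finset.sum_le_sum fun a _ => ?_
            exact mul_le_mul_of_nonneg_left (hε s a) (mul_nonneg (hd.1 s) (hπ.1 s a))
      _ = (∑ s, |dh s - d s|) + 2 * ε := by
          congr 1
          · apply Finset.sum_congr rfl; intro s _
            rw [← Finset.mul_sum, hπ.2, mul_one]
          · have : ∀ s, ∑ a, d s * π s a * (2 * ε) = d s * (2 * ε) := by
              intro s
              rw [← Finset.sum_mul, ← Finset.mul_sum, hπ.2, mul_one]
            simp only [this]
            rw [← Finset.sum_mul, hd.2, one_mul]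
      _ ≤ 2 * ε * t + 2 * ε := by linarith
      _ = 2 * ε * ((t : ℕ) + 1 : ℕ) := by push_cast; ring

/-- Simulation-style bound: |η_M̂(π) − η_M(π)| ≤ (2γ r_max/(1−γ)²)·sup_{s,a} D_TV. -/
theorem return_gap_tv_bound (γ : ℝ) (hγ0 : 0 < γ) (hγ1 : γ < 1)
    (T Th : S → A → S → ℝ) (hT : IsKernel T) (hTh : IsKernel Th)
    (μ0 : S → ℝ) (hμ : IsDist μ0) (r : S → A → ℝ)
    (rmax : ℝ) (hr : ∀ s a, |r s a| ≤ rmax)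
    (π : S → A → ℝ) (hπ : IsPolicy π) :
    |ret γ Th π μ0 r - ret γ T π μ0 r|
      ≤ (2 * γ * rmax / (1 - γ) ^ 2) * ⨆ sa : S × A, tvDist (Th sa.1 sa.2) (T sa.1 sa.2) := by
  classical
  by_cases hne : Nonempty (S × A)
  case neg =>
    haveI : IsEmpty (S × A) := not_nonempty_iff.mp hne
    have hz : ∀ (K : S → A → S → ℝ), ret γ K π μ0 r = 0 := by
      intro K
      unfold ret
      have hzero : ∀ t : ℕ, (∑ s, ∑ a, stateDist K π μ0 t s * π s a * r s a) = 0 := by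
        intro t
        by_cases hS : Nonempty S
        · haveI : IsEmpty A := by
            by_contra hA
            exact hne ⟨hS.some, (not_isEmpty_iff.mp hA).some⟩
          simp
        · haveI : IsEmpty S := not_nonempty_iff.mp hS
          simp
      simp only [hzero, mul_zero, tsum_zero]
    rw [hz T, hz Th]
    rw [Real.iSup_of_isEmpty]
    simp
  case pos =>
    haveI : Nonempty S := ⟨hne.some.1⟩
    haveI : Nonempty A := ⟨hne.some.2⟩
    set ε := ⨆ sa : S × A, tvDist (Th sa.1 sa.2) (T sa.1 sa.2) with hεdef
    have hεsup : ∀ s a, tvDist (Th s a) (T s a) ≤ ε := fun s a =>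
      le_ciSup (f := fun sa : S × A => tvDist (Th sa.1 sa.2) (T sa.1 sa.2))
        ((Set.finite_range _).bddAbove) (s, a)
    have hε0 : 0 ≤ ε :=
      le_trans (tvDist_nonneg (Th hne.some.1 hne.some.2) (T hne.some.1 hne.some.2))
        (hεsup _ _)
    have hε : ∀ s a, ∑ s', |Th s a s' - T s a s'| ≤ 2 * ε := by
      intro s a
      refine le_trans (l1_le_two_tvDist _ _ (by rw [hTh.2, hT.2])) ?_
      have := hεsup s a; linarith
    have hrm : 0 ≤ rmax := le_trans (abs_nonneg _) (hr hne.some.1 hne.some.2)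
    -- reward sums
    set R : (S → A → S → ℝ) → ℕ → ℝ :=
      fun K t => ∑ s, ∑ a, stateDist K π μ0 t s * π s a * r s a with hRdef
    have hRb : ∀ (K : S → A → S → ℝ), IsKernel K → ∀ t, |R K t| ≤ rmax := by
      intro K hK t
      have hd := stateDist_isDist K π μ0 hK hπ hμ t
      calc |R K t| ≤ ∑ s, ∑ a, |stateDist K π μ0 t s * π s a * r s a| := by
            refine le_trans (Finset.abs_sum_le_sum_abs _ _) ?_
            exact Finset.sum_le_sum fun s _ => Finset.abs_sum_le_sum_abs _ _
        _ ≤ ∑ s, ∑ a, stateDist K π μ0 t s * π s a * rmax := by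
            refine Finset.sum_le_sum fun s _ => Finset.sum_le_sum fun a _ => ?_
            rw [abs_mul, abs_mul, abs_of_nonneg (hd.1 s), abs_of_nonneg (hπ.1 s a)]
            exact mul_le_mul_of_nonneg_left (hr s a)
              (mul_nonneg (hd.1 s) (hπ.1 s a))
        _ = rmax := by
            have : ∀ s, ∑ a, stateDist K π μ0 t s * π s a * rmax
                = stateDist K π μ0 t s * rmax := by
              intro s
              rw [← Finset.sum_mul, ← Finset.mul_sum, hπ.2, mul_one]
            simp only [this]
            rw [← Finset.sum_mul, hd.2, one_mul]
    have hsum : ∀ (K : S → A → S → ℝ), IsKernel K →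
        Summable (fun t : ℕ => γ ^ t * R K t) := by
      intro K hK
      refine Summable.of_norm_bounded (g := fun t => rmax * γ ^ t)
        ((summable_geometric_of_lt_one hγ0.le hγ1).mul_left rmax) (fun t => ?_)
      rw [Real.norm_eq_abs, abs_mul, abs_pow, abs_of_pos hγ0, mul_comm]
      exact mul_le_mul_of_nonneg_right (hRb K hK t) (pow_nonneg hγ0.le t)
    have hdiff : ret γ Th π μ0 r - ret γ T π μ0 r
        = ∑' t : ℕ, γ ^ t * (R Th t - R T t) := by
      unfold ret
      rw [← Summable.tsum_sub (hsum Th hTh) (hsum T hT)]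
      exact tsum_congr fun t => by rw [hRdef]; ring
    have hgap : ∀ t : ℕ, |R Th t - R T t| ≤ 2 * ε * t * rmax := by
      intro t
      have hΔ := stateDist_l1_bound T Th π μ0 hT hTh hπ hμ ε hε t
      have hrw : R Th t - R T t
          = ∑ s, ∑ a, (stateDist Th π μ0 t s - stateDist T π μ0 t s) * π s a * r s a := by
        rw [hRdef]
        rw [← Finset.sum_sub_distrib]
        refine Finset.sum_congr rfl fun s _ => ?_
        rw [← Finset.sum_sub_distrib]
        exact Finset.sum_congr rfl fun a _ => by ring
      rw [hrw]
      calc |∑ s, ∑ a, (stateDist Th π μ0 t s - stateDist T π μ0 t s) * π s a * r s a|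
          ≤ ∑ s, ∑ a, |(stateDist Th π μ0 t s - stateDist T π μ0 t s) * π s a * r s a| := by
            refine le_trans (Finset.abs_sum_le_sum_abs _ _) ?_
            exact Finset.sum_le_sum fun s _ => Finset.abs_sum_le_sum_abs _ _
        _ ≤ ∑ s, ∑ a, |stateDist Th π μ0 t s - stateDist T π μ0 t s| * π s a * rmax := by
            refine Finset.sum_le_sum fun s _ => Finset.sum_le_sum fun a _ => ?_
            rw [abs_mul, abs_mul, abs_of_nonneg (hπ.1 s a)]
            exact mul_le_mul_of_nonneg_left (hr s a)
              (mul_nonneg (abs_nonneg _) (hπ.1 s a))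
        _ = (∑ s, |stateDist Th π μ0 t s - stateDist T π μ0 t s|) * rmax := by
            rw [Finset.sum_mul]
            refine Finset.sum_congr rfl fun s _ => ?_
            rw [← Finset.sum_mul, ← Finset.mul_sum, hπ.2, mul_one]
        _ ≤ 2 * ε * t * rmax := mul_le_mul_of_nonneg_right hΔ hrm
    have hterm : ∀ t : ℕ, |γ ^ t * (R Th t - R T t)| ≤ 2 * ε * rmax * (t * γ ^ t) := by
      intro t
      rw [abs_mul, abs_pow, abs_of_pos hγ0]
      calc γ ^ t * |R Th t - R T t| ≤ γ ^ t * (2 * ε * t * rmax) :=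
            mul_le_mul_of_nonneg_left (hgap t) (pow_nonneg hγ0.le t)
        _ = 2 * ε * rmax * (t * γ ^ t) := by ring
    have hγnorm : ‖γ‖ < 1 := by rwa [Real.norm_eq_abs, abs_of_pos hγ0]
    have hsummand : Summable (fun t : ℕ => 2 * ε * rmax * ((t : ℝ) * γ ^ t)) := by
      have h := (summable_pow_mul_geometric_of_norm_lt_one 1 hγnorm (R := ℝ))
      simpa [pow_one] using h.mul_left (2 * ε * rmax)
    have habsSummable : Summable (fun t : ℕ => |γ ^ t * (R Th t - R T t)|) :=
      Summable.of_nonneg_of_le (fun t => abs_nonneg _) hterm hsummand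
    have h1 : |∑' t : ℕ, γ ^ t * (R Th t - R T t)|
        ≤ ∑' t : ℕ, |γ ^ t * (R Th t - R T t)| := by
      have := norm_tsum_le_tsum_norm (f := fun t : ℕ => γ ^ t * (R Th t - R T t))
          (by simpa only [Real.norm_eq_abs] using habsSummable)
      simpa only [Real.norm_eq_abs] using this
    have h2 : ∑' t : ℕ, |γ ^ t * (R Th t - R T t)|
        ≤ ∑' t : ℕ, 2 * ε * rmax * ((t : ℝ) * γ ^ t) :=
      Summable.tsum_le_tsum hterm habsSummable hsummand
    have h3 : ∑' t : ℕ, 2 * ε * rmax * ((t : ℝ) * γ ^ t)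
        = 2 * ε * rmax * (γ / (1 - γ) ^ 2) := by
      rw [tsum_mul_left, tsum_coe_mul_geometric_of_norm_lt_one hγnorm]
    rw [hdiff]
    calc |∑' t : ℕ, γ ^ t * (R Th t - R T t)|
        ≤ 2 * ε * rmax * (γ / (1 - γ) ^ 2) := by linarith
      _ = (2 * γ * rmax / (1 - γ) ^ 2) * ε := by ring

end MDP
end
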